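/- Let H : E → ℝ be smooth. At every point x = (t,q,p) ∈ E, the kernel of dα_H is the line spanned by Z_H: a vector v ∈ E satisfies dα_H(x)(v, w) = 0 for all w ∈ E if and only if v = μ · Z_H(x) = μ · (1, ∂H/∂p(x), −∂H/∂q(x)) for some μ ∈ ℝ. -/

import Mathlib

noncomputable section
open scoped ContDiff

/-- The extended phase space `E = ℝ × ℝⁿ × ℝⁿ`, with points `x = (t, q, p)`. -/
abbrev EE (n : ℕ) : Type := ℝ × (Fin n → ℝ) × (Fin n → ℝ)

/-- The Poincaré–Cartan 1-form `α_H = p dq − H dt`: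
`α_H(x)(τ̂, ξ̂, η̂) = ∑ i, pᵢ ξ̂ᵢ − H(x) τ̂`. -/
def pcForm {n : ℕ} (H : EE n → ℝ) (x : EE n) : EE n →L[ℝ] ℝ :=
  (∑ i, x.2.2 i • ((ContinuousLinearMap.proj i).comp
      ((ContinuousLinearMap.fst ℝ (Fin n → ℝ) (Fin n → ℝ)).comp
        (ContinuousLinearMap.snd ℝ ℝ ((Fin n → ℝ) × (Fin n → ℝ))))))
    - H x • ContinuousLinearMap.fst ℝ ℝ ((Fin n → ℝ) × (Fin n → ℝ))

/-- The vector field `Z_H(x) = (1, ∂H/∂p(x), −∂H/∂q(x))` of Hamilton's equations. -/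
def ZH {n : ℕ} (H : EE n → ℝ) (x : EE n) : EE n :=
  (1, fun i => fderiv ℝ H x (0, 0, Pi.single i 1),
      fun i => - fderiv ℝ H x (0, Pi.single i 1, 0))

/-- The Lie derivative of a 1-form `α` along a vector field `ζ`:
`(L_ζ α)(x)(v) = (Dα(x)(ζ(x)))(v) + α(x)(Dζ(x)(v))`. -/
def lieDeriv {n : ℕ} (ζ : EE n → EE n) (α : EE n → (EE n →L[ℝ] ℝ)) (x : EE n) :
    EE n →L[ℝ] ℝ :=
  fderiv ℝ α x (ζ x) + (α x).comp (fderiv ℝ ζ x)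

/-- The exterior derivative of a 1-form:
`dα(x)(u,v) = (Dα(x)u)(v) − (Dα(x)v)(u)`. -/
def extDerivOneForm {n : ℕ} (α : EE n → (EE n →L[ℝ] ℝ)) (x u v : EE n) : ℝ :=
  fderiv ℝ α x u v - fderiv ℝ α x v u

namespace PCAux

variable {n : ℕ}

/-- `q`-coordinate functionals. -/
def Lq (i : Fin n) : EE n →L[ℝ] ℝ :=
  (ContinuousLinearMap.proj i).comp
    ((ContinuousLinearMap.fst ℝ (Fin n → ℝ) (Fin n → ℝ)).comp
      (ContinuousLinearMap.snd ℝ ℝ ((Fin n → ℝ) × (Fin n → ℝ))))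

/-- `p`-coordinate functionals. -/
def Lp (i : Fin n) : EE n →L[ℝ] ℝ :=
  (ContinuousLinearMap.proj i).comp
    ((ContinuousLinearMap.snd ℝ (Fin n → ℝ) (Fin n → ℝ)).comp
      (ContinuousLinearMap.snd ℝ ℝ ((Fin n → ℝ) × (Fin n → ℝ))))

/-- `t`-coordinate functional. -/
def Lt : EE n →L[ℝ] ℝ := ContinuousLinearMap.fst ℝ ℝ ((Fin n → ℝ) × (Fin n → ℝ))

@[simp] lemma Lq_apply (i : Fin n) (u : EE n) : Lq i u = u.2.1 i := rfl
@[simp] lemma Lp_apply (i : Fin n) (u : EE n) : Lp i u = u.2.2 i := rfl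
@[simp] lemma Lt_apply (u : EE n) : Lt u = u.1 := rfl

lemma hasFDerivAt_pcForm (H : EE n → ℝ) (hH : Differentiable ℝ H) (x : EE n) :
    HasFDerivAt (pcForm H)
      ((∑ i, (Lp i).smulRight (Lq i)) - (fderiv ℝ H x).smulRight Lt) x := by
  have h1 : HasFDerivAt (fun y : EE n => ∑ i, y.2.2 i • Lq i)
      (∑ i, (Lp i).smulRight (Lq i)) x := by
    refine HasFDerivAt.fun_sum fun i _ => ?_
    exact ((Lp i).hasFDerivAt (x := x)).smul_const (Lq i)
  have h2 : HasFDerivAt (fun y : EE n => H y • Lt (n := n))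
      ((fderiv ℝ H x).smulRight Lt) x := (hH x).hasFDerivAt.smul_const Lt
  exact h1.sub h2

lemma extDeriv_pcForm (H : EE n → ℝ) (hH : Differentiable ℝ H) (x u w : EE n) :
    extDerivOneForm (pcForm H) x u w =
      ((∑ i, u.2.2 i * w.2.1 i) - fderiv ℝ H x u * w.1)
        - ((∑ i, w.2.2 i * u.2.1 i) - fderiv ℝ H x w * u.1) := by
  rw [extDerivOneForm, (hasFDerivAt_pcForm H hH x).fderiv]
  simp [ContinuousLinearMap.sum_apply, smul_eq_mul]

/-- Decomposition of a continuous linear functional on `EE n`. -/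
lemma clm_apply (f : EE n →L[ℝ] ℝ) (v : EE n) :
    f v = v.1 * f (1, 0, 0) + (∑ i, v.2.1 i * f (0, Pi.single i 1, 0))
      + ∑ i, v.2.2 i * f (0, 0, Pi.single i 1) := by
  have hv : v = v.1 • (((1 : ℝ), (0 : Fin n → ℝ), (0 : Fin n → ℝ)) : EE n)
      + (∑ i, v.2.1 i • ((((0 : ℝ), Pi.single i (1 : ℝ), (0 : Fin n → ℝ))) : EE n))
      + ∑ i, v.2.2 i • ((((0 : ℝ), (0 : Fin n → ℝ), Pi.single i (1 : ℝ))) : EE n) := by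
    refine Prod.ext ?_ (Prod.ext ?_ ?_)
    · simp [Prod.fst_sum]
    · funext j
      simp [Prod.fst_sum, Prod.snd_sum, Finset.sum_apply, Pi.single_apply,
        mul_ite, Finset.sum_ite_eq]
    · funext j
      simp [Prod.fst_sum, Prod.snd_sum, Finset.sum_apply, Pi.single_apply,
        mul_ite, Finset.sum_ite_eq]
  conv_lhs => rw [hv]
  simp only [map_add, map_sum, map_smul, smul_eq_mul]

end PCAux

open PCAux in
/-- at every point `x` of the extended phase space, the kernel of `dα_H`
is the line spanned by `Z_H(x)`: `dα_H(x)(v, ·) = 0` iff `v = μ • Z_H(x)` for some `μ`. -/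
theorem kernel_pcForm_spanned_by_ZH {n : ℕ} (hn : 1 ≤ n)
    (H : EE n → ℝ) (hH : ContDiff ℝ ∞ H) (x v : EE n) :
    (∀ w, extDerivOneForm (pcForm H) x v w = 0) ↔ ∃ μ : ℝ, v = μ • ZH H x := by
  have hd : Differentiable ℝ H := hH.differentiable (by norm_num)
  constructor
  · intro h
    refine ⟨v.1, ?_⟩
    have hq : ∀ i, v.2.1 i = v.1 * fderiv ℝ H x (0, 0, Pi.single i 1) := by
      intro i
      have := h (0, 0, Pi.single i 1)
      rw [extDeriv_pcForm H hd] at this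
      simp [Pi.single_apply, mul_ite, Finset.sum_ite_eq'] at this
      linarith [this]
    have hp : ∀ i, v.2.2 i = -(v.1 * fderiv ℝ H x (0, Pi.single i 1, 0)) := by
      intro i
      have := h (0, Pi.single i 1, 0)
      rw [extDeriv_pcForm H hd] at this
      simp [Pi.single_apply, mul_ite, Finset.sum_ite_eq'] at this
      linarith [this]
    refine Prod.ext ?_ (Prod.ext ?_ ?_)
    · simp [ZH]
    · funext i; simpa [ZH, smul_eq_mul] using hq i
    · funext i
      simpa [ZH, smul_eq_mul, mul_neg] using hp i
  · rintro ⟨μ, rfl⟩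
    intro w
    rw [extDeriv_pcForm H hd]
    have hz0 : fderiv ℝ H x (ZH H x) = fderiv ℝ H x (1, 0, 0) := by
      rw [clm_apply]
      simp only [ZH]
      have hc : (∑ i, fderiv ℝ H x (0, 0, Pi.single i 1) *
            fderiv ℝ H x (0, Pi.single i 1, 0))
          + ∑ i, (- fderiv ℝ H x (0, Pi.single i 1, 0)) *
            fderiv ℝ H x (0, 0, Pi.single i 1) = 0 := by
        rw [← Finset.sum_add_distrib]
        exact Finset.sum_eq_zero fun i _ => by ring
      linarith [hc]
    have hZ : fderiv ℝ H x (μ • ZH H x) = μ * fderiv ℝ H x (1, 0, 0) := by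
      rw [map_smul, smul_eq_mul, hz0]
    have hw : fderiv ℝ H x w = w.1 * fderiv ℝ H x (1, 0, 0)
        + (∑ i, w.2.1 i * fderiv ℝ H x (0, Pi.single i 1, 0))
        + ∑ i, w.2.2 i * fderiv ℝ H x (0, 0, Pi.single i 1) :=
      clm_apply (fderiv ℝ H x) w
    have e1 : ∑ i, (μ • ZH H x).2.2 i * w.2.1 i
        = -(μ * ∑ i, w.2.1 i * fderiv ℝ H x (0, Pi.single i 1, 0)) := by
      rw [Finset.mul_sum, ← Finset.sum_neg_distrib]
      refine Finset.sum_congr rfl fun i _ => ?_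
      simp only [ZH, Prod.smul_snd, Prod.snd, Pi.smul_apply, smul_eq_mul]
      ring
    have e2 : ∑ i, w.2.2 i * (μ • ZH H x).2.1 i
        = μ * ∑ i, w.2.2 i * fderiv ℝ H x (0, 0, Pi.single i 1) := by
      rw [Finset.mul_sum]
      refine Finset.sum_congr rfl fun i _ => ?_
      simp only [ZH, Prod.smul_fst, Prod.smul_snd, Pi.smul_apply, smul_eq_mul]
      ring
    have e3 : (μ • ZH H x).1 = μ := by simp [ZH]
    rw [e1, e2, e3, hZ, hw]
    ring
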